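/- Let K = ℓ²(ℕ) (indexed from n = 1) and H = K ⊕ K. Let A be the diagonal operator on K with diagonals (1/n)_n and B the diagonal operator with diagonals (1/n²)_n. Then the systems (H; K ⊕ 0, graph(A)) and (H; K ⊕ 0, graph(B)) are algebraically isomorphic (there is a linear bijection of H carrying the corresponding subspaces onto each other), but they are not boundedly isomorphic. -/

import Mathlib

/- STATEMENT 9: On K = ℓ²(ℕ) (indexed from 1) with A the diagonal operator with
diagonals (1/n)ₙ and B the diagonal operator with diagonals (1/n²)ₙ, the systems
(K ⊕ K; K ⊕ 0, graph A) and (K ⊕ K; K ⊕ 0, graph B) are algebraically isomorphic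
but not boundedly isomorphic. -/

noncomputable section

abbrev K : Type := lp (fun _ : ℕ => ℂ) 2

/-- The graph of the diagonal operator with diagonals `a`, as a subspace of `K × K`. -/
def diagGraph (a : ℕ → ℂ) : Submodule ℂ (K × K) where
  carrier := {p | ∀ n, p.2 n = a n * p.1 n}
  add_mem' := by
    intro p q hp hq n
    simp only [Prod.snd_add, Prod.fst_add, lp.coeFn_add, Pi.add_apply, hp n, hq n]
    ring
  zero_mem' := by
    intro n
    simp [lp.coeFn_zero]
  smul_mem' := by
    intro c p hp n
    simp only [Prod.smul_snd, Prod.smul_fst, lp.coeFn_smul, Pi.smul_apply, hp n, smul_eq_mul]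
    ring

/-- The subspace K ⊕ 0 of K ⊕ K. -/
def firstSummand : Submodule ℂ (K × K) := (⊤ : Submodule ℂ K).prod (⊥ : Submodule ℂ K)

section My
open scoped ENNReal
open Filter Topology


lemma memtwo_of_le {f g : ℕ → ℂ} (hg : Memℓp g 2) (h : ∀ n, ‖f n‖ ≤ ‖g n‖) : Memℓp f 2 := by
  apply memℓp_gen
  have hs : Summable fun n => ‖g n‖ ^ (2:ℝ≥0∞).toReal := hg.summable (by norm_num)
  exact hs.of_nonneg_of_le (fun n => by positivity)
    (fun n => Real.rpow_le_rpow (norm_nonneg _) (h n) (by positivity))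

lemma lp_norm_le_of_le {f g : K} (h : ∀ n, ‖f n‖ ≤ ‖g n‖) : ‖f‖ ≤ ‖g‖ := by
  have hp : (0:ℝ) < (2:ℝ≥0∞).toReal := by norm_num
  rw [← Real.rpow_le_rpow_iff (norm_nonneg f) (norm_nonneg g) hp,
    lp.norm_rpow_eq_tsum hp, lp.norm_rpow_eq_tsum hp]
  refine Summable.tsum_le_tsum (fun n => Real.rpow_le_rpow (norm_nonneg _) (h n) hp.le) ?_ ?_
  · exact (lp.memℓp f).summable hp
  · exact (lp.memℓp g).summable hp

lemma lp_add_apply (u v : K) (n : ℕ) : (u + v) n = u n + v n := by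
  rw [lp.coeFn_add]; rfl

lemma lp_smul_apply (c : ℂ) (u : K) (n : ℕ) : (c • u) n = c * u n := by
  rw [lp.coeFn_smul]; rfl

lemma norm_natCast_add_one (n : ℕ) : ‖((n:ℂ)+1)‖ = (n:ℝ)+1 := by
  have h : ((n:ℂ)+1) = (((n:ℝ)+1 : ℝ) : ℂ) := by push_cast; ring
  rw [h, Complex.norm_real]
  exact abs_of_nonneg (by positivity)

/-- diagonal linear map for a pointwise-contractive symbol -/
def diagMap (a : ℕ → ℂ) (ha : ∀ n, ‖a n‖ ≤ 1) : K →ₗ[ℂ] K where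
  toFun x := ⟨fun n => a n * x n, by
    refine memtwo_of_le (lp.memℓp x) fun n => ?_
    rw [norm_mul]
    calc ‖a n‖ * ‖x n‖ ≤ 1 * ‖x n‖ := by gcongr; exact ha n
    _ = ‖x n‖ := one_mul _⟩
  map_add' x y := by
    ext n
    simp [lp.coeFn_add, Pi.add_apply]
    exact mul_add _ _ _
  map_smul' c x := by
    ext n
    simp [lp.coeFn_smul, Pi.smul_apply]
    ring

@[simp] lemma diagMap_apply (a : ℕ → ℂ) (ha) (x : K) (n : ℕ) :
    (diagMap a ha x : ℕ → ℂ) n = a n * x n := rfl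

lemma diagMap_norm_le (a : ℕ → ℂ) (ha) (x : K) : ‖diagMap a ha x‖ ≤ ‖x‖ := by
  refine lp_norm_le_of_le fun n => ?_
  show ‖a n * x n‖ ≤ _
  rw [norm_mul]
  calc ‖a n‖ * ‖x n‖ ≤ 1 * ‖x n‖ := by gcongr; exact ha n
  _ = ‖x n‖ := one_mul _

lemma lp_coord_eq {x y : K} (h : x = y) (n : ℕ) : x n = y n := by rw [h]

lemma diagMap_injective (a : ℕ → ℂ) (ha) (h0 : ∀ n, a n ≠ 0) :
    Function.Injective (diagMap a ha) := by
  intro x y h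
  ext n
  exact mul_left_cancel₀ (h0 n) (lp_coord_eq h n)

abbrev aC : ℕ → ℂ := fun n => 1 / ((n:ℂ)+1)
abbrev bC : ℕ → ℂ := fun n => 1 / ((n:ℂ)+1)^2

lemma natCast_add_one_ne (n : ℕ) : ((n:ℂ)+1) ≠ 0 := Nat.cast_add_one_ne_zero n

lemma aC_norm (n : ℕ) : ‖aC n‖ = ((n:ℝ)+1)⁻¹ := by
  simp only [aC, one_div, norm_inv, norm_natCast_add_one]

lemma bC_norm (n : ℕ) : ‖bC n‖ = (((n:ℝ)+1)^2)⁻¹ := by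
  simp only [bC, one_div, norm_inv, norm_pow, norm_natCast_add_one]

lemma aC_le (n : ℕ) : ‖aC n‖ ≤ 1 := by
  rw [aC_norm]
  rw [inv_le_one_iff₀]
  right; linarith [Nat.cast_nonneg (α := ℝ) n]

lemma bC_le (n : ℕ) : ‖bC n‖ ≤ 1 := by
  rw [bC_norm, inv_le_one_iff₀]
  right; nlinarith [Nat.cast_nonneg (α := ℝ) n]

lemma aC_ne (n : ℕ) : aC n ≠ 0 := one_div_ne_zero (natCast_add_one_ne n)

lemma bC_ne (n : ℕ) : bC n ≠ 0 := one_div_ne_zero (pow_ne_zero _ (natCast_add_one_ne n))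

def coordL (n : ℕ) : K →ₗ[ℂ] ℂ where
  toFun x := x n
  map_add' x y := by simp [lp.coeFn_add]
  map_smul' c x := by simp [lp.coeFn_smul]

@[simp] lemma coordL_apply (n : ℕ) (x : K) : coordL n x = x n := rfl

def yfun (s : ℝ) : ℕ → ℂ := fun n => ((((n:ℝ)+1) ^ (-s) : ℝ) : ℂ)

lemma yfun_norm (s : ℝ) (n : ℕ) : ‖yfun s n‖ = ((n:ℝ)+1) ^ (-s) := by
  rw [yfun, Complex.norm_real]
  exact abs_of_nonneg (Real.rpow_nonneg (by positivity) _)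

lemma npos (n : ℕ) : (0:ℝ) < (n:ℝ)+1 := by positivity

lemma yfun_mem (s : ℝ) (hs : 1/2 < s) : Memℓp (yfun s) 2 := by
  apply memℓp_gen
  have h1 : Summable (fun n : ℕ => ((n:ℝ)) ^ (-(2*s))) :=
    Real.summable_nat_rpow.2 (by linarith)
  have h2 := (summable_nat_add_iff 1).2 h1
  refine h2.congr fun n => ?_
  push_cast
  rw [yfun_norm, ← Real.rpow_mul (npos n).le]
  congr 1
  simp
  ring

def yK : Set.Ioo (1/2:ℝ) 1 → K := fun s => ⟨yfun s, yfun_mem s s.2.1⟩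

lemma key_combo (t : Finset ↥(Set.Ioo (1/2:ℝ) 1)) (g : ↥(Set.Ioo (1/2:ℝ) 1) → ℂ)
    (i : ↥(Set.Ioo (1/2:ℝ) 1)) (hi : i ∈ t) (hgi : g i ≠ 0) :
    ¬ Memℓp (fun n : ℕ => ((n:ℂ)+1) * (∑ j ∈ t, g j • yK j : K) n) 2 := by
  intro hmem
  classical
  set t' := t.filter (fun j => g j ≠ 0) with ht'
  have hne : t'.Nonempty := ⟨i, by simp [ht', hi, hgi]⟩
  set i₀ := t'.min' hne with hi₀
  have hi₀t' : i₀ ∈ t' := t'.min'_mem hne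
  have hg₀ : g i₀ ≠ 0 := (Finset.mem_filter.1 hi₀t').2
  have hi₀t : i₀ ∈ t := (Finset.mem_filter.1 hi₀t').1
  set c := ‖g i₀‖ with hc
  have hcpos : 0 < c := norm_pos_iff.2 hg₀
  set z : K := ∑ j ∈ t, g j • yK j with hz
  -- coordinates of z
  have hzco : ∀ n, z n = ∑ j ∈ t, g j * yfun j n := by
    intro n
    have h1 : coordL n z = ∑ j ∈ t, coordL n (g j • yK j) := by
      rw [hz]; exact map_sum (coordL n) _ t
    have h2 : ∀ j, coordL n (g j • yK j) = g j * yfun j n := by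
      intro j
      rw [map_smul]
      rfl
    simp only [h2] at h1
    exact h1
  -- the error sum
  set hfun : ℕ → ℝ := fun n => ∑ j ∈ t.erase i₀, ‖g j‖ * ((n:ℝ)+1) ^ ((i₀:ℝ) - (j:ℝ)) with hh
  have htend : Tendsto hfun atTop (𝓝 0) := by
    have : Tendsto (fun n : ℕ => ∑ j ∈ t.erase i₀, ‖g j‖ * ((n:ℝ)+1) ^ ((i₀:ℝ) - (j:ℝ)))
        atTop (𝓝 (∑ j ∈ t.erase i₀, (0:ℝ))) := by
      refine tendsto_finset_sum _ fun j hj => ?_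
      by_cases hgj : g j = 0
      · simp [hgj]
      · have hjt' : j ∈ t' := Finset.mem_filter.2 ⟨Finset.mem_of_mem_erase hj, hgj⟩
        have hlt : (i₀:ℝ) < (j:ℝ) := by
          have hle : i₀ ≤ j := t'.min'_le j hjt'
          have hne2 : i₀ ≠ j := (Finset.ne_of_mem_erase hj).symm
          have : (i₀ : Set.Ioo (1/2:ℝ) 1) < j := lt_of_le_of_ne hle hne2
          exact_mod_cast this
        have hb : Tendsto (fun n:ℕ => (n:ℝ)+1) atTop atTop :=
          tendsto_atTop_add_const_right _ 1 tendsto_natCast_atTop_atTop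
        have h0 : Tendsto (fun x : ℝ => x ^ ((i₀:ℝ) - (j:ℝ))) atTop (𝓝 0) := by
          have := tendsto_rpow_neg_atTop (y := (j:ℝ) - (i₀:ℝ)) (by linarith)
          simpa [neg_sub] using this
        have := (h0.comp hb).const_mul ‖g j‖
        simpa using this
    simpa using this
  -- summability of w gives tendsto 0
  have hw : Tendsto (fun n : ℕ => ‖((n:ℂ)+1) * z n‖ ^ (2:ℝ≥0∞).toReal) atTop (𝓝 0) :=
    (hmem.summable (by norm_num)).tendsto_atTop_zero
  -- eventual lower bound
  have hlow : ∀ᶠ n : ℕ in atTop, c/2 ≤ ‖((n:ℂ)+1) * z n‖ := by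
    have hev : ∀ᶠ n in atTop, hfun n ≤ c/2 := by
      have := htend.eventually (eventually_le_nhds (by linarith : (0:ℝ) < c/2))
      exact this
    refine hev.mono fun n hn => ?_
    -- compute
    set P : ℝ := ((n:ℝ)+1) ^ (1 - (i₀:ℝ)) with hP
    have hP1 : 1 ≤ P := by
      apply Real.one_le_rpow (by linarith [npos n])
      have := i₀.2.2
      linarith
    have hterm : ∀ j : ↥(Set.Ioo (1/2:ℝ) 1),
        ‖((n:ℂ)+1) * yfun j n‖ = ((n:ℝ)+1) ^ (1 - (j:ℝ)) := by
      intro j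
      rw [norm_mul, norm_natCast_add_one, yfun_norm]
      rw [show (1 - (j:ℝ)) = 1 + (-(j:ℝ)) by ring, Real.rpow_add (npos n), Real.rpow_one]
    -- rewrite the sum
    have hsplit : ((n:ℂ)+1) * z n
        = g i₀ * (((n:ℂ)+1) * yfun i₀ n)
          + ∑ j ∈ t.erase i₀, g j * (((n:ℂ)+1) * yfun j n) := by
      rw [hzco, ← Finset.add_sum_erase _ _ hi₀t]
      rw [mul_add, Finset.mul_sum]
      congr 1
      · ring
      · exact Finset.sum_congr rfl fun j _ => by ring
    have hnorm1 : ‖g i₀ * (((n:ℂ)+1) * yfun i₀ n)‖ = c * P := by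
      rw [norm_mul, hterm i₀]
    have hnorm2 : ‖∑ j ∈ t.erase i₀, g j * (((n:ℂ)+1) * yfun j n)‖ ≤ P * hfun n := by
      refine (norm_sum_le _ _).trans ?_
      rw [hh, Finset.mul_sum]
      refine Finset.sum_le_sum fun j hj => ?_
      rw [norm_mul, hterm j]
      have hpp : P * ((n:ℝ)+1) ^ ((i₀:ℝ) - (j:ℝ)) = ((n:ℝ)+1) ^ (1 - (j:ℝ)) := by
        rw [hP, ← Real.rpow_add (npos n)]; congr 1; ring
      have heq : ‖g j‖ * ((n:ℝ)+1) ^ (1 - (j:ℝ))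
          = P * (‖g j‖ * ((n:ℝ)+1) ^ ((i₀:ℝ) - (j:ℝ))) := by rw [← hpp]; ring
      exact le_of_eq heq
    have haux : ‖g i₀ * (((n:ℂ)+1) * yfun i₀ n)‖
        - ‖∑ j ∈ t.erase i₀, g j * (((n:ℂ)+1) * yfun j n)‖ ≤ ‖((n:ℂ)+1) * z n‖ := by
      set A := g i₀ * (((n:ℂ)+1) * yfun i₀ n)
      set B := ∑ j ∈ t.erase i₀, g j * (((n:ℂ)+1) * yfun j n)
      have h3 : ‖A‖ ≤ ‖A + B‖ + ‖B‖ := by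
        have := norm_add_le (A + B) (-B)
        simpa using this
      rw [hsplit]
      linarith
    have hstep : c/2 ≤ P * (c - hfun n) := by nlinarith
    have : P * (c - hfun n) ≤ ‖((n:ℂ)+1) * z n‖ := by
      have : c * P - P * hfun n ≤ ‖((n:ℂ)+1) * z n‖ := by
        rw [← hnorm1]
        linarith
      nlinarith
    linarith
  -- contradiction
  have hup : ∀ᶠ n : ℕ in atTop,
      ‖((n:ℂ)+1) * z n‖ ^ (2:ℝ≥0∞).toReal < (c/2) ^ (2:ℝ≥0∞).toReal :=
    hw.eventually (eventually_lt_nhds (Real.rpow_pos_of_pos (by linarith) _))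
  obtain ⟨n, h1, h2⟩ := (hlow.and hup).exists
  have h4 : (c/2) ^ (2:ℝ≥0∞).toReal ≤ ‖((n:ℂ)+1) * z n‖ ^ (2:ℝ≥0∞).toReal :=
    Real.rpow_le_rpow (by linarith) h1 (by norm_num)
  linarith

def Ahat : K →ₗ[ℂ] K := diagMap aC aC_le
def Bhat : K →ₗ[ℂ] K := diagMap bC bC_le

lemma Ahat_inj : Function.Injective Ahat := diagMap_injective _ _ aC_ne
lemma Bhat_inj : Function.Injective Bhat := diagMap_injective _ _ bC_ne

lemma mem_rangeA {z : K} (hz : z ∈ LinearMap.range Ahat) :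
    Memℓp (fun n : ℕ => ((n:ℂ)+1) * z n) 2 := by
  obtain ⟨x, rfl⟩ := hz
  have h : (fun n : ℕ => ((n:ℂ)+1) * (Ahat x) n) = fun n => x n := by
    funext n
    show ((n:ℂ)+1) * (aC n * x n) = x n
    have := natCast_add_one_ne n
    field_simp [aC]
  rw [h]
  exact lp.memℓp x

lemma mem_rangeB {z : K} (hz : z ∈ LinearMap.range Bhat) :
    Memℓp (fun n : ℕ => ((n:ℂ)+1) * z n) 2 := by
  obtain ⟨x, rfl⟩ := hz
  refine memtwo_of_le (lp.memℓp x) fun n => ?_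
  show ‖((n:ℂ)+1) * (bC n * x n)‖ ≤ ‖x n‖
  rw [norm_mul, norm_mul, norm_natCast_add_one, bC_norm]
  have h1 : (0:ℝ) < (n:ℝ)+1 := npos n
  have key : ((n:ℝ)+1) * (((n:ℝ)+1)^2)⁻¹ ≤ 1 := by
    rw [mul_inv_le_iff₀ (by positivity)]
    nlinarith
  calc ((n:ℝ)+1) * ((((n:ℝ)+1)^2)⁻¹ * ‖x n‖) = (((n:ℝ)+1) * (((n:ℝ)+1)^2)⁻¹) * ‖x n‖ := by ring
  _ ≤ 1 * ‖x n‖ := by gcongr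
  _ = ‖x n‖ := one_mul _

lemma indep_quot {p : Submodule ℂ K}
    (hp : ∀ z : K, z ∈ p → Memℓp (fun n : ℕ => ((n:ℂ)+1) * z n) 2) :
    LinearIndependent ℂ (fun s : ↥(Set.Ioo (1/2:ℝ) 1) => Submodule.Quotient.mk (p := p) (yK s)) := by
  rw [linearIndependent_iff']
  intro t g hsum i hi
  by_contra hgi
  have hz : (∑ j ∈ t, g j • yK j) ∈ p := by
    have h0 : p.mkQ (∑ j ∈ t, g j • yK j) = 0 := by
      rw [map_sum]
      simp only [map_smul, Submodule.mkQ_apply]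
      exact hsum
    rw [Submodule.mkQ_apply, Submodule.Quotient.mk_eq_zero] at h0
    exact h0
  exact key_combo t g i hi hgi (hp _ hz)

lemma mk_K_le : (Cardinal.mk K) ≤ Cardinal.continuum := by
  have h1 : Cardinal.mk K ≤ Cardinal.mk (∀ _ : ℕ, ℂ) := by
    refine Cardinal.mk_le_of_injective (f := fun x : K => (x : ∀ _ : ℕ, ℂ)) ?_
    intro x y h
    ext n
    exact congrFun h n
  refine h1.trans_eq ?_
  rw [← Cardinal.power_def, Cardinal.mk_complex, Cardinal.mk_nat, Cardinal.continuum_power_aleph0]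

lemma rank_K_le : Module.rank ℂ K ≤ Cardinal.continuum :=
  (rank_le_card ℂ K).trans mk_K_le

lemma corank_eq {p : Submodule ℂ K}
    (hp : ∀ z : K, z ∈ p → Memℓp (fun n : ℕ => ((n:ℂ)+1) * z n) 2) :
    Module.rank ℂ (K ⧸ p) = Cardinal.continuum := by
  refine le_antisymm ((rank_quotient_le p).trans rank_K_le) ?_
  have h := (indep_quot hp).cardinal_le_rank
  rwa [Cardinal.mk_Ioo_real (by norm_num : (1/2:ℝ) < 1)] at h

-- The algebraic bijection R of K carrying range Ahat onto range Bhat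
set_option synthInstance.maxHeartbeats 1000000 in
lemma exists_R : ∃ R : K ≃ₗ[ℂ] K,
    Submodule.map (R : K →ₗ[ℂ] K) (LinearMap.range Ahat) = LinearMap.range Bhat := by
  obtain ⟨Wa, hWa⟩ := Submodule.exists_isCompl (LinearMap.range Ahat)
  obtain ⟨Wb, hWb⟩ := Submodule.exists_isCompl (LinearMap.range Bhat)
  have hra : Module.rank ℂ Wa = Cardinal.continuum := by
    rw [← (Submodule.quotientEquivOfIsCompl _ _ hWa).rank_eq]
    exact corank_eq (fun z hz => mem_rangeA hz)
  have hrb : Module.rank ℂ Wb = Cardinal.continuum := by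
    rw [← (Submodule.quotientEquivOfIsCompl _ _ hWb).rank_eq]
    exact corank_eq (fun z hz => mem_rangeB hz)
  obtain ⟨eW⟩ : Nonempty (Wa ≃ₗ[ℂ] Wb) :=
    nonempty_linearEquiv_of_rank_eq (by rw [hra, hrb])
  set eR : (LinearMap.range Ahat) ≃ₗ[ℂ] (LinearMap.range Bhat) :=
    (LinearEquiv.ofInjective Ahat Ahat_inj).symm.trans (LinearEquiv.ofInjective Bhat Bhat_inj)
  set R : K ≃ₗ[ℂ] K :=
    (Submodule.prodEquivOfIsCompl _ _ hWa).symm.trans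
      ((eR.prodCongr eW).trans (Submodule.prodEquivOfIsCompl _ _ hWb))
  refine ⟨R, le_antisymm ?_ ?_⟩
  · rintro _ ⟨z, hz, rfl⟩
    have h1 : (Submodule.prodEquivOfIsCompl _ _ hWa).symm z = ((⟨z, hz⟩ : LinearMap.range Ahat), 0) :=
      Submodule.prodEquivOfIsCompl_symm_apply_left _ _ hWa (⟨z, hz⟩ : LinearMap.range Ahat)
    have : R z = ↑(eR (⟨z, hz⟩ : LinearMap.range Ahat)) := by
      show (Submodule.prodEquivOfIsCompl _ _ hWb) ((eR.prodCongr eW) ((Submodule.prodEquivOfIsCompl _ _ hWa).symm z)) = _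
      rw [h1]
      show (Submodule.prodEquivOfIsCompl _ _ hWb) (eR (⟨z, hz⟩ : LinearMap.range Ahat), eW 0) = _
      rw [map_zero]
      simp [Submodule.coe_prodEquivOfIsCompl']
    show R z ∈ LinearMap.range Bhat
    rw [this]
    exact (eR (⟨z, hz⟩ : LinearMap.range Ahat)).2
  · rintro y hy
    refine ⟨(R.symm y : K), ?_, by simp⟩
    have h1 : (Submodule.prodEquivOfIsCompl _ _ hWb).symm y = ((⟨y, hy⟩ : LinearMap.range Bhat), 0) :=
      Submodule.prodEquivOfIsCompl_symm_apply_left _ _ hWb (⟨y, hy⟩ : LinearMap.range Bhat)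
    have : R.symm y = ↑(eR.symm (⟨y, hy⟩ : LinearMap.range Bhat)) := by
      show (Submodule.prodEquivOfIsCompl _ _ hWa) ((eR.prodCongr eW).symm ((Submodule.prodEquivOfIsCompl _ _ hWb).symm y)) = _
      rw [h1]
      show (Submodule.prodEquivOfIsCompl _ _ hWa) (eR.symm (⟨y, hy⟩ : LinearMap.range Bhat), eW.symm 0) = _
      rw [map_zero]
      simp [Submodule.coe_prodEquivOfIsCompl']
    rw [this]
    exact (eR.symm (⟨y, hy⟩ : LinearMap.range Bhat)).2



lemma mem_diagGraph {a : ℕ → ℂ} {p : K × K} : p ∈ diagGraph a ↔ ∀ n, p.2 n = a n * p.1 n :=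
  Iff.rfl

lemma mem_diagGraph_A {p : K × K} : p ∈ diagGraph aC ↔ p.2 = Ahat p.1 := by
  constructor
  · intro h; ext n; exact h n
  · intro h n; rw [h]; rfl

lemma mem_diagGraph_B {p : K × K} : p ∈ diagGraph bC ↔ p.2 = Bhat p.1 := by
  constructor
  · intro h; ext n; exact h n
  · intro h n; rw [h]; rfl

lemma mem_firstSummand {p : K × K} : p ∈ firstSummand ↔ p.2 = 0 := by
  constructor
  · intro h; exact (Submodule.mem_bot ℂ).1 h.2
  · intro h; exact ⟨Submodule.mem_top, (Submodule.mem_bot ℂ).2 h⟩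

set_option synthInstance.maxHeartbeats 1000000 in
lemma part1 : ∃ V : (K × K) ≃ₗ[ℂ] (K × K),
    V '' (firstSummand : Set (K × K)) = (firstSummand : Set (K × K)) ∧
    V '' ((diagGraph aC : Submodule ℂ (K × K)) : Set (K × K)) =
      ((diagGraph bC : Submodule ℂ (K × K)) : Set (K × K)) := by
  obtain ⟨R, hR⟩ := exists_R
  set eA := LinearEquiv.ofInjective Ahat Ahat_inj with heA
  set eB := LinearEquiv.ofInjective Bhat Bhat_inj with heB
  set mid : (LinearMap.range Ahat) ≃ₗ[ℂ] (LinearMap.range Bhat) :=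
    (R.submoduleMap (LinearMap.range Ahat)).trans (LinearEquiv.ofEq _ _ hR) with hmid
  set T : K ≃ₗ[ℂ] K := eA.trans (mid.trans eB.symm) with hT
  have hBT : ∀ x : K, Bhat (T x) = R (Ahat x) := by
    intro x
    have h1 : eB (T x) = mid (eA x) := by
      rw [hT]
      simp
    have h2 : (↑(eB (T x)) : K) = Bhat (T x) := LinearEquiv.ofInjective_apply _ _
    have h3 : (↑(mid (eA x)) : K) = R ↑(eA x) := by
      rw [hmid]
      show (↑(LinearEquiv.ofEq _ _ hR ((R.submoduleMap (LinearMap.range Ahat)) (eA x))) : K) = _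
      rw [LinearEquiv.coe_ofEq_apply, LinearEquiv.submoduleMap_apply]
    have h4 : (↑(eA x) : K) = Ahat x := LinearEquiv.ofInjective_apply _ _
    rw [← h2, h1, h3, h4]
  refine ⟨T.prodCongr R, ?_, ?_⟩
  · ext q
    constructor
    · rintro ⟨p, hp, rfl⟩
      have hp2 : p.2 = 0 := mem_firstSummand.1 hp
      show (T p.1, R p.2) ∈ firstSummand
      rw [mem_firstSummand, hp2, map_zero]
    · intro hq
      have hq2 : q.2 = 0 := mem_firstSummand.1 hq
      refine ⟨(T.symm q.1, 0), mem_firstSummand.2 rfl, ?_⟩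
      show (T (T.symm q.1), R 0) = q
      rw [map_zero, T.apply_symm_apply, ← hq2]
  · ext q
    constructor
    · rintro ⟨p, hp, rfl⟩
      have hp2 : p.2 = Ahat p.1 := mem_diagGraph_A.1 hp
      show (T p.1, R p.2) ∈ diagGraph bC
      rw [mem_diagGraph_B, hp2, hBT]
    · intro hq
      have hq2 : q.2 = Bhat q.1 := mem_diagGraph_B.1 hq
      refine ⟨(T.symm q.1, Ahat (T.symm q.1)), mem_diagGraph_A.2 rfl, ?_⟩
      show (T (T.symm q.1), R (Ahat (T.symm q.1))) = q
      rw [← hBT, T.apply_symm_apply, ← hq2]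

-- ### Part 2 infrastructure

/-- continuous version of diagMap -/
def diagCLM (a : ℕ → ℂ) (ha : ∀ n, ‖a n‖ ≤ 1) : K →L[ℂ] K :=
  LinearMap.mkContinuous (diagMap a ha) 1 (fun x => by
    rw [one_mul]; exact diagMap_norm_le a ha x)

@[simp] lemma diagCLM_apply (a : ℕ → ℂ) (ha) (x : K) : diagCLM a ha x = diagMap a ha x := rfl

def Acont : K →L[ℂ] K := diagCLM aC aC_le
def Bcont : K →L[ℂ] K := diagCLM bC bC_le

/-- truncation keeping the coordinates `< M` -/
def PLow (M : ℕ) : K →ₗ[ℂ] K where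
  toFun x := ⟨fun n => if n < M then x n else 0, by
    refine memtwo_of_le (lp.memℓp x) fun n => ?_
    by_cases h : n < M <;> simp [h]⟩
  map_add' x y := by
    ext n
    rw [lp_add_apply]
    by_cases h : n < M <;> simp [h]
  map_smul' c x := by
    ext n
    rw [lp_smul_apply]
    by_cases h : n < M <;> simp [h]

/-- truncation keeping the coordinates `≥ M` -/
def QHigh (M : ℕ) : K →ₗ[ℂ] K where
  toFun x := ⟨fun n => if n < M then 0 else x n, by
    refine memtwo_of_le (lp.memℓp x) fun n => ?_
    by_cases h : n < M <;> simp [h]⟩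
  map_add' x y := by
    ext n
    rw [lp_add_apply]
    by_cases h : n < M <;> simp [h]
  map_smul' c x := by
    ext n
    rw [lp_smul_apply]
    by_cases h : n < M <;> simp [h]

@[simp] lemma PLow_apply (M : ℕ) (x : K) (n : ℕ) :
    (PLow M x) n = if n < M then x n else 0 := rfl

@[simp] lemma QHigh_apply (M : ℕ) (x : K) (n : ℕ) :
    (QHigh M x) n = if n < M then 0 else x n := rfl

lemma PLow_add_QHigh (M : ℕ) (x : K) : PLow M x + QHigh M x = x := by
  ext n
  rw [lp.coeFn_add, Pi.add_apply]
  by_cases h : n < M <;> simp [h]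

/-- standard basis vectors -/
def esgl (i : ℕ) : K := lp.single 2 i (1:ℂ)

lemma esgl_apply (i j : ℕ) : (esgl i) j = if j = i then 1 else 0 := by
  rcases eq_or_ne j i with h | h
  · subst h; simp [esgl, lp.single_apply_self]
  · simp [esgl, lp.single_apply_ne (E := fun _ : ℕ => ℂ) 2 i (1:ℂ) h, h]

lemma esgl_indep (M : ℕ) : LinearIndependent ℂ (fun i : Fin M => esgl i) := by
  rw [Fintype.linearIndependent_iff]
  intro g hg i
  have h := congrArg (coordL (i : ℕ)) hg
  rw [map_sum, map_zero] at h
  rw [Finset.sum_eq_single i] at h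
  · simpa [coordL_apply, esgl_apply] using h
  · intro j _ hj
    have : ((i:ℕ) : ℕ) ≠ (j : ℕ) := fun hc => hj (by ext; omega)
    simp [coordL_apply, esgl_apply, map_smul, this, hj.symm]
  · intro hi
    exact absurd (Finset.mem_univ i) hi

/-- the span of the first M basis vectors -/
def Espan (M : ℕ) : Submodule ℂ K := Submodule.span ℂ (Set.range fun i : Fin M => esgl i)

lemma mem_Espan {M : ℕ} (x : K) (hx : ∀ n, M ≤ n → x n = 0) : x ∈ Espan M := by
  have hrep : x = ∑ i ∈ Finset.range M, x i • esgl i := by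
    ext n
    have hco : (∑ i ∈ Finset.range M, x i • esgl i) n
        = ∑ i ∈ Finset.range M, x i * (esgl i) n := by
      show coordL n (∑ i ∈ Finset.range M, x i • esgl i) = _
      rw [map_sum]
      exact Finset.sum_congr rfl fun i _ => by simp [coordL_apply]
    show x n = (∑ i ∈ Finset.range M, x i • esgl i) n
    rw [hco]
    by_cases h : n < M
    · rw [Finset.sum_eq_single n]
      · simp [esgl_apply]
      · intro j _ hj; simp [esgl_apply, Ne.symm hj]
      · intro hn; exact absurd (Finset.mem_range.2 h) hn
    · rw [hx n (le_of_not_gt h)]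
      refine (Finset.sum_eq_zero fun j hj => ?_).symm
      have : n ≠ j := by
        intro hc; subst hc; exact h (Finset.mem_range.1 hj)
      simp [esgl_apply, this]
  rw [hrep]
  exact Submodule.sum_mem _ fun i hi =>
    Submodule.smul_mem _ _ (Submodule.subset_span ⟨⟨i, Finset.mem_range.1 hi⟩, rfl⟩)

lemma Espan_support {M : ℕ} {x : K} (hx : x ∈ Espan M) : ∀ n, M ≤ n → x n = 0 := by
  refine Submodule.span_induction ?_ ?_ ?_ ?_ hx
  · rintro _ ⟨i, rfl⟩ n hn
    have : n ≠ (i : ℕ) := by have := i.2; omega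
    simp [esgl_apply, this]
  · intro n _; simp [lp.coeFn_zero]
  · intro u v _ _ hu hv n hn
    rw [lp.coeFn_add, Pi.add_apply, hu n hn, hv n hn, add_zero]
  · intro c u _ hu n hn
    rw [lp.coeFn_smul, Pi.smul_apply, hu n hn, smul_zero]

lemma PLow_mem_Espan (M : ℕ) (x : K) : PLow M x ∈ Espan M :=
  mem_Espan _ fun n hn => by simp [Nat.not_lt.2 hn]

lemma finrank_Espan (M : ℕ) : Module.finrank ℂ (Espan M) = M := by
  rw [Espan, finrank_span_eq_card (esgl_indep M)]
  simp

lemma norm_le_A {M : ℕ} {v : K} (hv : v ∈ Espan M) : ‖v‖ ≤ (M:ℝ) * ‖Ahat v‖ := by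
  have hb : ‖v‖ ≤ ‖((M:ℕ):ℂ) • Ahat v‖ := by
    refine lp_norm_le_of_le fun n => ?_
    rw [lp_smul_apply]
    show ‖v n‖ ≤ ‖((M:ℕ):ℂ) * (aC n * v n)‖
    by_cases h : n < M
    · rw [norm_mul, norm_mul, Complex.norm_natCast, aC_norm]
      have h2 : (n:ℝ)+1 ≤ (M:ℝ) := by exact_mod_cast h
      have h1 : (1:ℝ) ≤ (M:ℝ) * (((n:ℝ)+1)⁻¹) := by
        nlinarith [mul_inv_cancel₀ (ne_of_gt (npos n)), inv_pos.2 (npos n)]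
      calc ‖v n‖ = 1 * ‖v n‖ := (one_mul _).symm
      _ ≤ ((M:ℝ) * (((n:ℝ)+1)⁻¹)) * ‖v n‖ := by
          have := norm_nonneg (v n)
          nlinarith
      _ = (M:ℝ) * ((((n:ℝ)+1)⁻¹) * ‖v n‖) := by ring
    · rw [Espan_support hv n (le_of_not_gt h)]
      simp
  refine hb.trans ?_
  rw [norm_smul, Complex.norm_natCast]

lemma Bhat_QHigh_norm (M : ℕ) (x : K) :
    ‖Bhat (QHigh M x)‖ ≤ ((((M:ℝ))+1)^2)⁻¹ * ‖x‖ := by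
  have hb : ‖Bhat (QHigh M x)‖ ≤ ‖((((((M:ℝ))+1)^2)⁻¹ : ℝ) : ℂ) • x‖ := by
    refine lp_norm_le_of_le fun n => ?_
    rw [lp_smul_apply]
    show ‖bC n * (QHigh M x) n‖ ≤ _
    rw [QHigh_apply]
    by_cases h : n < M
    · simp [h]
      positivity
    · simp only [h, if_false]
      rw [norm_mul, norm_mul, bC_norm, Complex.norm_real, Real.norm_eq_abs,
        abs_of_nonneg (by positivity : (0:ℝ) ≤ (((M:ℝ)+1)^2)⁻¹)]
      have hMn : (M:ℝ)+1 ≤ (n:ℝ)+1 := by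
        have : (M:ℝ) ≤ (n:ℝ) := by exact_mod_cast Nat.le_of_not_lt h
        linarith
      gcongr
  refine hb.trans ?_
  rw [norm_smul, Complex.norm_real, Real.norm_eq_abs,
    abs_of_nonneg (by positivity : (0:ℝ) ≤ (((M:ℝ)+1)^2)⁻¹)]

set_option synthInstance.maxHeartbeats 1000000 in
set_option maxHeartbeats 1000000 in
lemma part2 : ¬ (∃ V : (K × K) ≃L[ℂ] (K × K),
    V '' (firstSummand : Set (K × K)) = (firstSummand : Set (K × K)) ∧
    V '' ((diagGraph aC : Submodule ℂ (K × K)) : Set (K × K)) =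
      ((diagGraph bC : Submodule ℂ (K × K)) : Set (K × K))) := by
  rintro ⟨V, h1, h2⟩
  have hV1 : ∀ x : K, (V (x, 0)).2 = 0 := by
    intro x
    have hmem : ((x, (0:K)) : K × K) ∈ (firstSummand : Set (K × K)) := mem_firstSummand.2 rfl
    have h3 : V (x, 0) ∈ (firstSummand : Set (K × K)) := by
      rw [← h1]; exact ⟨_, hmem, rfl⟩
    exact mem_firstSummand.1 h3
  have hVsplit : ∀ x y : K, V (x, y) = V (x, 0) + V (0, y) := by
    intro x y
    rw [← map_add]
    congr 1
    simp
  set U : K →L[ℂ] K := (ContinuousLinearMap.fst ℂ K K).comp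
      ((V : (K × K) →L[ℂ] (K × K)).comp ((ContinuousLinearMap.id ℂ K).prod Acont)) with hU
  have hUapp : ∀ x : K, U x = (V (x, Ahat x)).1 := fun x => rfl
  set Rc : K →L[ℂ] K := (ContinuousLinearMap.snd ℂ K K).comp
      ((V : (K × K) →L[ℂ] (K × K)).comp (ContinuousLinearMap.inr ℂ K K)) with hRc
  have hRcapp : ∀ y : K, Rc y = (V (0, y)).2 := fun y => rfl
  have hgraph : ∀ x : K, (V (x, Ahat x)).2 = Bhat (U x) := by
    intro x
    have hmem : ((x, Ahat x) : K × K) ∈ (diagGraph aC : Set (K × K)) :=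
      mem_diagGraph_A.2 rfl
    have h3 : V (x, Ahat x) ∈ (diagGraph bC : Set (K × K)) := by
      rw [← h2]; exact ⟨_, hmem, rfl⟩
    have h4 := mem_diagGraph_B.1 h3
    rw [h4, hUapp]
  have hRA : ∀ x : K, Rc (Ahat x) = Bhat (U x) := by
    intro x
    have h5 : (V (x, Ahat x)).2 = (V (x, 0)).2 + (V (0, Ahat x)).2 := by
      rw [hVsplit x (Ahat x)]; rfl
    rw [hV1 x, zero_add] at h5
    rw [hRcapp, ← h5, hgraph]
  have hker : Rc.ker = ⊥ := by
    rw [LinearMap.ker_eq_bot']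
    intro y hy
    have h5 : V (0, y) ∈ (firstSummand : Set (K × K)) :=
      mem_firstSummand.2 (by rw [← hRcapp]; exact hy)
    rw [← h1] at h5
    obtain ⟨p, hp, hVp⟩ := h5
    have hpy : p = ((0:K), y) := V.injective (by rw [hVp])
    rw [hpy] at hp
    exact mem_firstSummand.1 hp
  have hrange : Rc.range = ⊤ := by
    rw [LinearMap.range_eq_top]
    intro z
    refine ⟨(V.symm (0, z)).2, ?_⟩
    have h7 : V ((V.symm ((0:K), z)).1, (V.symm ((0:K), z)).2) = ((0:K), z) := by
      rw [Prod.mk.eta]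
      exact V.apply_symm_apply _
    have h6 := hVsplit (V.symm ((0:K), z)).1 (V.symm ((0:K), z)).2
    rw [h7] at h6
    have h8 := congrArg Prod.snd h6
    simp only [Prod.snd_add] at h8
    rw [hV1, zero_add] at h8
    rw [ContinuousLinearMap.coe_coe, hRcapp]
    simpa using h8.symm
  set Rcl : K ≃L[ℂ] K := ContinuousLinearEquiv.ofBijective Rc hker hrange with hRcl
  set C : K →L[ℂ] K := (Rcl.symm : K →L[ℂ] K) with hC
  have hCB : ∀ x : K, Ahat x = C (Bhat (U x)) := by
    intro x
    have h9 : Bhat (U x) = Rcl (Ahat x) := by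
      rw [← hRA]
      show Rc (Ahat x) = (ContinuousLinearEquiv.ofBijective Rc hker hrange) (Ahat x)
      rw [ContinuousLinearEquiv.coeFn_ofBijective]
    rw [h9]
    show Ahat x = Rcl.symm (Rcl (Ahat x))
    rw [Rcl.symm_apply_apply]
  obtain ⟨N, hN⟩ := exists_nat_gt (‖C‖ * ‖U‖)
  -- pigeonhole
  set L : K →ₗ[ℂ] K :=
    ((C : K →ₗ[ℂ] K).comp Bhat).comp ((PLow (N+1)).comp (U : K →ₗ[ℂ] K)) with hL
  set Fsub : Submodule ℂ K :=
    Submodule.map ((C : K →ₗ[ℂ] K).comp Bhat) (Espan (N+1)) with hF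
  have hLmem : ∀ v : K, L v ∈ Fsub := fun v =>
    ⟨PLow (N+1) (U v), PLow_mem_Espan _ _, rfl⟩
  haveI hfd1 : FiniteDimensional ℂ (Espan (N+1)) :=
    FiniteDimensional.span_of_finite ℂ (Set.finite_range _)
  haveI hfd2 : FiniteDimensional ℂ (Espan (N+2)) :=
    FiniteDimensional.span_of_finite ℂ (Set.finite_range _)
  haveI hfd3 : FiniteDimensional ℂ Fsub := by
    rw [hF]
    infer_instance
  have hdimF : Module.finrank ℂ Fsub ≤ N + 1 := by
    refine le_trans (Submodule.finrank_map_le _ _) ?_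
    rw [finrank_Espan]
  set φ : (Espan (N+2)) →ₗ[ℂ] Fsub := L.restrict (fun v _ => hLmem v) with hφ
  have hninj : ¬ Function.Injective φ := by
    intro hinj
    have h10 := LinearMap.finrank_le_finrank_of_injective hinj
    rw [finrank_Espan] at h10
    omega
  obtain ⟨p1, p2, hfeq, hne⟩ := Function.not_injective_iff.1 hninj
  set v : Espan (N+2) := p1 - p2 with hv
  have hv0 : v ≠ 0 := sub_ne_zero.2 hne
  set w : K := (v : K) with hw
  have hw0 : w ≠ 0 := by
    simpa [hw] using (Submodule.coe_eq_zero (x := v)).not.2 hv0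
  have hwE : w ∈ Espan (N+2) := v.2
  have hLw : L w = 0 := by
    have h11 : φ v = 0 := by rw [hv, map_sub, hfeq, sub_self]
    have h12 : (φ v : K) = L w := rfl
    rw [h11] at h12
    exact h12.symm
  have hmain : Ahat w = C (Bhat (QHigh (N+1) (U w))) := by
    have h13 : Bhat (U w) = Bhat (PLow (N+1) (U w)) + Bhat (QHigh (N+1) (U w)) := by
      rw [← map_add, PLow_add_QHigh]
    have h14 : C (Bhat (PLow (N+1) (U w))) = 0 := hLw
    rw [hCB w, h13, map_add, h14, zero_add]
  have e1 : ‖w‖ ≤ ((N:ℝ)+2) * ‖Ahat w‖ := by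
    have h := norm_le_A hwE
    push_cast at h
    exact h
  have e2 : ‖Ahat w‖ ≤ ‖C‖ * ((((N:ℝ)+2)^2)⁻¹ * (‖U‖ * ‖w‖)) := by
    rw [hmain]
    refine (C.le_opNorm _).trans ?_
    gcongr
    refine (Bhat_QHigh_norm (N+1) (U w)).trans ?_
    have h15 : (((N:ℝ)+1)+1) = ((N:ℝ)+2) := by push_cast; ring
    rw [show ((((N+1):ℕ):ℝ)+1) = ((N:ℝ)+2) by push_cast; ring]
    gcongr
    exact U.le_opNorm w
  have hwpos : 0 < ‖w‖ := norm_pos_iff.2 hw0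
  have hNpos : (0:ℝ) < (N:ℝ)+2 := by positivity
  have hfinal : ‖w‖ ≤ (‖C‖ * ‖U‖ / ((N:ℝ)+2)) * ‖w‖ := by
    calc ‖w‖ ≤ ((N:ℝ)+2) * ‖Ahat w‖ := e1
    _ ≤ ((N:ℝ)+2) * (‖C‖ * ((((N:ℝ)+2)^2)⁻¹ * (‖U‖ * ‖w‖))) := by gcongr
    _ = (‖C‖ * ‖U‖ / ((N:ℝ)+2)) * ‖w‖ := by
        field_simp
  have hCU : ‖C‖ * ‖U‖ / ((N:ℝ)+2) < 1 := by
    rw [div_lt_one hNpos]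
    linarith
  nlinarith

end My


open Filter Topology in
theorem algebraically_but_not_boundedly_isomorphic :
    (∃ V : (K × K) ≃ₗ[ℂ] (K × K),
        V '' ((firstSummand : Submodule ℂ (K × K)) : Set (K × K)) =
          (firstSummand : Set (K × K)) ∧
        V '' ((diagGraph fun n : ℕ => 1 / ((n : ℂ) + 1)) : Set (K × K)) =
          ((diagGraph fun n : ℕ => 1 / ((n : ℂ) + 1) ^ 2) : Set (K × K))) ∧
    ¬ (∃ V : (K × K) ≃L[ℂ] (K × K),
        V '' (firstSummand : Set (K × K)) = (firstSummand : Set (K × K)) ∧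
        V '' ((diagGraph fun n : ℕ => 1 / ((n : ℂ) + 1)) : Set (K × K)) =
          ((diagGraph fun n : ℕ => 1 / ((n : ℂ) + 1) ^ 2) : Set (K × K))) := by
  exact ⟨part1, part2⟩

end
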